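/- Let p be a prime and s ≥ 1. In Λ = ℤ_p[[X]] set ω_n = (1+X)^{p^n} − 1 for n ≥ 0, and let ν_n ∈ Λ be the unique power series with X·ν_n = ω_n. Let V = Λ/(X^s). Then V is a free ℤ_p-module of rank s, the quotient V/ν_n·V is finite for every n, and there exists N such that for all n ≥ N the Λ-submodule of V generated by the image of ν_{n+1} equals p times the Λ-submodule generated by the image of ν_n, i.e. ν_{n+1}·V = p·ν_n·V. -/

import Mathlib

set_option synthInstance.maxHeartbeats 1000000
set_option maxHeartbeats 1000000
open PowerSeries Pointwise


/-- The Iwasawa algebra `Λ = ℤ_p[[X]]`. -/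
abbrev Lam1 (p : ℕ) [Fact p.Prime] := PowerSeries ℤ_[p]

/-- The module `V = Λ/(X^s)`. -/
abbrev Vmod (p : ℕ) [Fact p.Prime] (s : ℕ) :=
  Lam1 p ⧸ Ideal.span {(PowerSeries.X : Lam1 p) ^ s}

section aux
variable (p : ℕ) [Fact p.Prime] (s : ℕ)

theorem mySmul (a : Lam1 p) (v : Vmod p s) :
    a • v = Ideal.Quotient.mk _ a * v := by
  obtain ⟨b, rfl⟩ := Ideal.Quotient.mk_surjective v
  rw [← map_mul, ← smul_eq_mul]
  rfl

theorem myCoeffZeroPow (m : ℕ) :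
    constantCoeff (R := ℤ_[p]) ((1 + X) ^ m) = 1 := by
  rw [map_pow, map_add, map_one, constantCoeff_X, add_zero, one_pow]

theorem myCoeffOnePow (m : ℕ) : coeff (R := ℤ_[p]) 1 ((1 + X) ^ m) = m := by
  induction m with
  | zero => simp
  | succ m ih =>
    rw [pow_succ, mul_add, mul_one, map_add, ih, coeff_succ_mul_X,
      coeff_zero_eq_constantCoeff, myCoeffZeroPow]
    push_cast; ring
end aux

theorem myExpand {A : Type*} [CommRing A] (w : A) (q : ℕ) :
    (1 + w) ^ (q + 1) - 1 =
      w * (((q:A) + 1) + w * ∑ i ∈ Finset.range q, w ^ i * ((q+1).choose (i+2) : A)) := by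
  rw [add_comm 1 w, add_pow, Finset.sum_range_succ', Finset.sum_range_succ']
  simp only [one_pow, pow_zero, Nat.choose_one_right, Nat.choose_zero_right, Nat.cast_one,
    mul_one, one_mul, pow_one, Finset.mul_sum]
  rw [Finset.sum_congr rfl (fun i (_ : i ∈ Finset.range q) => show
      w ^ (i + 1 + 1) * ((q+1).choose (i + 1 + 1) : A)
        = w * (w * (w ^ i * ((q+1).choose (i+2) : A))) by ring)]
  rw [← Finset.mul_sum]
  rw [Nat.choose_one_right]
  push_cast
  ring

theorem mySupPowLe {R : Type*} [CommRing R] (I J : Ideal R) :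
    ∀ k m n : ℕ, m + n = k → (I ⊔ J) ^ k ≤ I ^ m ⊔ J ^ n := by
  intro k
  induction k with
  | zero => intro m n h; obtain ⟨rfl, rfl⟩ : m = 0 ∧ n = 0 := by omega
            simp
  | succ k ih =>
    intro m n h
    match m, n with
    | 0, n => simp [pow_zero]
    | m+1, 0 => simp [pow_zero]
    | m+1, n+1 =>
      have h1 : (I ⊔ J) ^ k ≤ I ^ m ⊔ J ^ (n+1) := ih m (n+1) (by omega)
      have h2 : (I ⊔ J) ^ k ≤ I ^ (m+1) ⊔ J ^ n := ih (m+1) n (by omega)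
      calc (I ⊔ J) ^ (k+1) = (I ⊔ J) * (I ⊔ J) ^ k := by rw [pow_succ, mul_comm]
        _ = I * (I ⊔ J) ^ k ⊔ J * (I ⊔ J) ^ k := by rw [Ideal.sup_mul]
        _ ≤ I * (I ^ m ⊔ J ^ (n+1)) ⊔ J * (I ^ (m+1) ⊔ J ^ n) :=
            sup_le_sup (Ideal.mul_mono_right h1) (Ideal.mul_mono_right h2)
        _ ≤ I ^ (m+1) ⊔ J ^ (n+1) := by
            rw [Ideal.mul_sup, Ideal.mul_sup]
            apply sup_le <;> apply sup_le
            · exact le_trans (le_of_eq (pow_succ' I m).symm) le_sup_left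
            · exact le_trans Ideal.mul_le_right le_sup_right
            · exact le_trans Ideal.mul_le_right le_sup_left
            · exact le_trans (le_of_eq (pow_succ' J n).symm) le_sup_right

section aux2
variable (p : ℕ) [Fact p.Prime] (s : ℕ)

noncomputable def myCoeffMap : Lam1 p →ₗ[ℤ_[p]] (Fin s → ℤ_[p]) :=
  LinearMap.pi (fun i => PowerSeries.coeff (R := ℤ_[p]) i)

theorem myKer : LinearMap.ker (myCoeffMap p s) =
    (Ideal.span {(PowerSeries.X : Lam1 p) ^ s}).restrictScalars ℤ_[p] := by
  ext f
  simp only [LinearMap.mem_ker, Submodule.restrictScalars_mem, Ideal.mem_span_singleton]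
  rw [X_pow_dvd_iff]
  constructor
  · intro h m hm
    have := congrFun h ⟨m, hm⟩
    simpa [myCoeffMap] using this
  · intro h
    funext i
    simpa [myCoeffMap] using h i i.2

theorem myCoeffMap_surj : Function.Surjective (myCoeffMap p s) := by
  intro c
  refine ⟨∑ i : Fin s, PowerSeries.monomial (R := ℤ_[p]) (i : ℕ) (c i), ?_⟩
  funext j
  simp only [myCoeffMap, LinearMap.pi_apply, map_sum, coeff_monomial]
  rw [Finset.sum_eq_single j] <;> simp +contextual [Fin.val_eq_val, eq_comm]

noncomputable def myEquiv : Vmod p s ≃ₗ[ℤ_[p]] (Fin s → ℤ_[p]) := by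
  set f1 := Submodule.liftQ _ (myCoeffMap p s) (le_of_eq (myKer p s).symm) with hf1
  have h1inj : Function.Injective f1 := by
    rw [← LinearMap.ker_eq_bot, hf1, Submodule.ker_liftQ_eq_bot]
    exact le_of_eq (myKer p s)
  have h1surj : Function.Surjective f1 := by
    intro c
    obtain ⟨f, hf⟩ := myCoeffMap_surj p s c
    exact ⟨Submodule.Quotient.mk f, hf⟩
  refine LinearEquiv.ofBijective
    (f1 ∘ₗ (Submodule.Quotient.restrictScalarsEquiv ℤ_[p]
        (Ideal.span {(PowerSeries.X : Lam1 p) ^ s})).symm.toLinearMap) ⟨?_, ?_⟩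
  · rw [LinearMap.coe_comp]
    exact h1inj.comp (LinearEquiv.injective _)
  · rw [LinearMap.coe_comp]
    exact h1surj.comp (LinearEquiv.surjective _)

-- the relation ν (n+1) = ν n * (p + ω n ψ)
theorem myNuRel (ν : ℕ → Lam1 p)
    (hν : ∀ n : ℕ, (PowerSeries.X : Lam1 p) * ν n = (1 + PowerSeries.X) ^ (p ^ n) - 1)
    (n : ℕ) :
    ν (n + 1) = ν n * ((p : Lam1 p) +
      ((1 + X) ^ (p ^ n) - 1) *
        ∑ i ∈ Finset.range (p - 1),
          ((1 + X) ^ (p ^ n) - 1) ^ i * (p.choose (i + 2) : Lam1 p)) := by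
  have hp : (p - 1) + 1 = p := Nat.succ_pred_eq_of_pos (Fact.out : p.Prime).pos
  apply mul_left_cancel₀ (X_ne_zero : (X : Lam1 p) ≠ 0)
  rw [hν (n + 1)]
  have h1 : ((1 : Lam1 p) + X) ^ p ^ (n+1) - 1
      = (1 + ((1 + X) ^ (p ^ n) - 1)) ^ ((p - 1) + 1) - 1 := by
    rw [hp, add_sub_cancel, ← pow_mul, pow_succ]
  rw [h1, myExpand]
  rw [← hν n]
  have hcast : ((p - 1 : ℕ) : Lam1 p) + 1 = (p : Lam1 p) := by
    exact_mod_cast congrArg (fun t : ℕ => (t : Lam1 p)) hp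
  rw [hp, hcast]
  ring

theorem myNuConst (ν : ℕ → Lam1 p)
    (hν : ∀ n : ℕ, (PowerSeries.X : Lam1 p) * ν n = (1 + PowerSeries.X) ^ (p ^ n) - 1)
    (n : ℕ) : constantCoeff (R := ℤ_[p]) (ν n) = ((p ^ n : ℕ) : ℤ_[p]) := by
  have := congrArg (coeff (R := ℤ_[p]) 1) (hν n)
  rw [mul_comm, coeff_succ_mul_X, map_sub, myCoeffOnePow, coeff_one] at this
  rw [coeff_zero_eq_constantCoeff] at this
  simpa using this

-- p^(n*s) is a multiple of ν n in Vmod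
theorem myPowDvd (ν : ℕ → Lam1 p)
    (hν : ∀ n : ℕ, (PowerSeries.X : Lam1 p) * ν n = (1 + PowerSeries.X) ^ (p ^ n) - 1)
    (n : ℕ) :
    ∃ a : Vmod p s, ((p : Vmod p s)) ^ (n * s)
      = Ideal.Quotient.mk _ (ν n) * a := by
  set I := Ideal.span {(X : Lam1 p) ^ s}
  set mkI := Ideal.Quotient.mk I
  have hX : (mkI X) ^ s = 0 := by
    rw [← map_pow, Ideal.Quotient.eq_zero_iff_mem]
    exact Ideal.subset_span rfl
  have hsub := sub_const_eq_shift_mul_X (ν n)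
  set g := (PowerSeries.mk fun q => coeff (R := ℤ_[p]) (q + 1) (ν n) : Lam1 p)
  have hνn : ν n = C (R := ℤ_[p]) ((p^n : ℕ) : ℤ_[p]) + g * X := by
    rw [← myNuConst p ν hν n]
    linear_combination hsub
  have hmkν : mkI (ν n) = (p : Vmod p s) ^ n + mkI g * mkI X := by
    rw [hνn, map_add, map_mul, map_natCast (C (R := ℤ_[p])), map_natCast mkI]
    push_cast
    ring
  set e : Vmod p s := mkI g * mkI X
  have he : e ^ s = 0 := by
    rw [mul_pow, hX, mul_zero]
  have he2 : (-e) ^ s = 0 := by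
    have h9 : (-e) ^ s = (-1) ^ s * e ^ s := by ring
    rw [h9, he, mul_zero]
  have hdvd : mkI (ν n) ∣ (p : Vmod p s) ^ (n * s) := by
    have h := sub_dvd_pow_sub_pow ((p : Vmod p s) ^ n) (-e) s
    rw [sub_neg_eq_add, ← hmkν, he2, sub_zero, ← pow_mul] at h
    exact h
  obtain ⟨a, ha⟩ := hdvd
  exact ⟨a, ha⟩

-- ω n lies in span {p^2} for n large
theorem myOmegaMem (n : ℕ) (hn : s + 1 ≤ n) :
    Ideal.Quotient.mk (Ideal.span {(X : Lam1 p) ^ s}) ((1 + X) ^ (p ^ n) - 1)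
      ∈ Ideal.span {(p : Vmod p s) ^ 2} := by
  set I := Ideal.span {(X : Lam1 p) ^ s}
  set mkI := Ideal.Quotient.mk I
  set J : Ideal (Vmod p s) := Ideal.span {(p : Vmod p s)} ⊔ Ideal.span {mkI X}
  have hp : (p - 1) + 1 = p := Nat.succ_pred_eq_of_pos (Fact.out : p.Prime).pos
  have key : ∀ m : ℕ, mkI ((1 + X) ^ (p ^ m) - 1) ∈ J ^ (m + 1) := by
    intro m
    induction m with
    | zero =>
      have hb : ((1:Lam1 p) + X) ^ p ^ 0 - 1 = X := by
        rw [pow_zero, pow_one]; ring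
      rw [hb, zero_add]; refine (le_of_eq (pow_one J).symm) ?_
      exact Submodule.mem_sup_right (Ideal.subset_span rfl)
    | succ m ih =>
      have hcast : ((p - 1 : ℕ) : Lam1 p) + 1 = (p : Lam1 p) := by
        exact_mod_cast congrArg (fun t : ℕ => (t : Lam1 p)) hp
      have h1 : ((1 : Lam1 p) + X) ^ p ^ (m+1) - 1
          = (1 + ((1 + X) ^ (p ^ m) - 1)) ^ ((p - 1) + 1) - 1 := by
        rw [hp, add_sub_cancel, ← pow_mul, pow_succ]
      set W : Lam1 p := (1 + X) ^ (p ^ m) - 1 with hW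
      set Ψ : Lam1 p := ∑ i ∈ Finset.range (p - 1),
        W ^ i * ((p.choose (i + 2) : Lam1 p)) with hΨ
      have hfact : ((1 : Lam1 p) + X) ^ p ^ (m+1) - 1 = W * ((p : Lam1 p) + W * Ψ) := by
        rw [h1, myExpand, hcast, hΨ]
        simp only [hp]
      rw [hfact, map_mul, map_add, map_mul, map_natCast mkI]
      set w := mkI W
      set ψ := mkI Ψ
      have hexp : w * ((p : Vmod p s) + w * ψ) = (p : Vmod p s) * w + w * w * ψ := by
        ring
      rw [hexp]
      apply Ideal.add_mem
      · have : (p : Vmod p s) * w ∈ J * J ^ (m + 1) :=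
          Ideal.mul_mem_mul (le_sup_left (α := Ideal (Vmod p s)) (Ideal.subset_span rfl)) ih
        exact (le_of_eq (pow_succ' J (m + 1)).symm) this
      · have h2 : w * w ∈ J ^ (m + 1) * J ^ (m + 1) := Ideal.mul_mem_mul ih ih
        replace h2 := (le_of_eq (pow_add J (m + 1) (m + 1)).symm) h2
        have h3 : w * w ∈ J ^ (m + 2) :=
          Ideal.pow_le_pow_right (by omega) h2
        exact Ideal.mul_mem_right ψ _ h3
  have h4 : mkI ((1 + X) ^ (p ^ n) - 1) ∈ J ^ (2 + s) :=
    Ideal.pow_le_pow_right (by omega) (key n)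
  have h5 := mySupPowLe (Ideal.span {(p : Vmod p s)}) (Ideal.span {mkI X}) (2 + s) 2 s rfl h4
  have hXs : Ideal.span {mkI X} ^ s = ⊥ := by
    rw [Ideal.span_singleton_pow, Ideal.span_singleton_eq_bot, ← map_pow,
      Ideal.Quotient.eq_zero_iff_mem]
    exact Ideal.subset_span rfl
  rw [hXs, sup_bot_eq, Ideal.span_singleton_pow] at h5
  exact h5

end aux2
theorem nu_smul_eventually_periodic_X
    (p : ℕ) [Fact p.Prime] (s : ℕ) (hs : 1 ≤ s)
    (ν : ℕ → Lam1 p)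
    (hν : ∀ n : ℕ, (PowerSeries.X : Lam1 p) * ν n =
      (1 + PowerSeries.X) ^ (p ^ n) - 1) :
    Module.Free ℤ_[p] (Vmod p s) ∧
      Module.finrank ℤ_[p] (Vmod p s) = s ∧
      (∀ n : ℕ,
        Finite (Vmod p s ⧸ (Ideal.span {ν n} • (⊤ : Submodule (Lam1 p) (Vmod p s))))) ∧
      ∃ N : ℕ, ∀ n ≥ N,
        Ideal.span {ν (n + 1)} • (⊤ : Submodule (Lam1 p) (Vmod p s)) =
          Ideal.span {(p : Lam1 p) * ν n} • (⊤ : Submodule (Lam1 p) (Vmod p s)) := by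
  set I : Ideal (Lam1 p) := Ideal.span {(X : Lam1 p) ^ s} with hI
  set mkI := Ideal.Quotient.mk I with hmkI
  refine ⟨Module.Free.of_equiv (myEquiv p s).symm, ?_, ?_, ?_⟩
  · rw [(myEquiv p s).finrank_eq]
    simp [Module.finrank_pi]
  · -- finiteness of the quotients
    intro n
    set N' := Ideal.span {ν n} • (⊤ : Submodule (Lam1 p) (Vmod p s)) with hN'
    obtain ⟨a, ha⟩ := myPowDvd p s ν hν n
    set k := n * s with hk
    have hann : ∀ v : Vmod p s, ((p : ℤ_[p]) ^ k) • v ∈ N' := by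
      intro v
      have hsc : ((p : ℤ_[p]) ^ k) • v = ((p : Lam1 p) ^ k) • v := by
        rw [← algebraMap_smul (Lam1 p) ((p : ℤ_[p]) ^ k) v, map_pow, map_natCast]
      rw [hsc, mySmul, map_pow, map_natCast, ha, mul_assoc, ← mySmul]
      rw [hN', Submodule.ideal_span_singleton_smul]
      exact Submodule.smul_mem_pointwise_smul _ _ _ Submodule.mem_top
    have hsurj : Function.Surjective (fun c : Fin s → Fin (p ^ k) =>
        (Submodule.Quotient.mk ((myEquiv p s).symm fun i => ((c i : ℕ) : ℤ_[p]))
          : Vmod p s ⧸ N')) := by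
      intro z
      obtain ⟨w, rfl⟩ := Submodule.Quotient.mk_surjective N' z
      set d := myEquiv p s w with hd
      refine ⟨fun i => ⟨(d i).appr k, PadicInt.appr_lt _ _⟩, ?_⟩
      rw [Submodule.Quotient.eq]
      have hdv : ∀ i : Fin s, ∃ b : ℤ_[p],
          ((((d i).appr k : ℕ) : ℤ_[p]) - d i) = (p : ℤ_[p]) ^ k * b := by
        intro i
        obtain ⟨b, hb⟩ := Ideal.mem_span_singleton.mp (PadicInt.appr_spec k (d i))
        exact ⟨-b, by rw [← neg_sub, hb]; ring⟩
      choose b hb using hdv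
      have hw : w = (myEquiv p s).symm d := ((myEquiv p s).symm_apply_apply w).symm
      have hss : ((myEquiv p s).symm fun i => (((d i).appr k : ℕ) : ℤ_[p])) - w
          = ((p : ℤ_[p]) ^ k) • (myEquiv p s).symm b := by
        rw [hw, ← map_sub, ← map_smul]
        congr 1
        funext i
        rw [Pi.sub_apply, Pi.smul_apply, smul_eq_mul]
        exact hb i
      rw [hss]
      exact hann _
    exact Finite.of_surjective _ hsurj
  · -- eventual periodicity
    refine ⟨s + 1, fun n hn => ?_⟩
    obtain ⟨a, ha⟩ := Ideal.mem_span_singleton'.mp (myOmegaMem p s n hn)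
    have hrel := myNuRel p ν hν n
    set ω : Lam1 p := (1 + X) ^ (p ^ n) - 1 with hω
    set Ψ : Lam1 p := ∑ i ∈ Finset.range (p - 1), ω ^ i * ((p.choose (i + 2) : Lam1 p)) with hΨ
    obtain ⟨τ, hτ⟩ := Ideal.Quotient.mk_surjective (I := I) (a * mkI Ψ)
    set u : Vmod p s := 1 + (p : Vmod p s) * (a * mkI Ψ) with hu_def
    have hkey : mkI (ν (n + 1)) = mkI ((p : Lam1 p) * ν n) * u := by
      rw [hrel, map_mul, map_add, map_mul, map_natCast, ← ha, map_mul mkI, map_natCast]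
      ring
    have hu : IsUnit u := by
      have h0 : u = mkI (1 + (p : Lam1 p) * τ) := by
        rw [map_add, map_one, map_mul, map_natCast, hτ]
      rw [h0]
      apply RingHom.isUnit_map
      rw [PowerSeries.isUnit_iff_constantCoeff, map_add, map_one, map_mul, map_natCast]
      set c := constantCoeff (R := ℤ_[p]) τ with hc
      rw [PadicInt.isUnit_iff]
      have h1 : ‖(p : ℤ_[p]) * c‖ < 1 := by
        calc ‖(p : ℤ_[p]) * c‖ ≤ ‖(p : ℤ_[p])‖ * ‖c‖ := norm_mul_le _ _
          _ ≤ ‖(p : ℤ_[p])‖ * 1 := by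
              exact mul_le_mul_of_nonneg_left (PadicInt.norm_le_one c) (norm_nonneg _)
          _ = ‖(p : ℤ_[p])‖ := mul_one _
          _ < 1 := by
              rw [PadicInt.norm_p]
              exact inv_lt_one_of_one_lt₀ (by exact_mod_cast (Fact.out : p.Prime).one_lt)
      rw [PadicInt.norm_add_eq_max_of_ne (by rw [norm_one]; exact (ne_of_lt h1).symm),
        norm_one, max_eq_left (le_of_lt h1)]
    have hcancel : u * (↑hu.unit⁻¹ : Vmod p s) = 1 := hu.mul_val_inv
    rw [Submodule.ideal_span_singleton_smul, Submodule.ideal_span_singleton_smul]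
    ext v
    simp only [← SetLike.mem_coe, Submodule.coe_pointwise_smul, Set.mem_smul_set,
      Submodule.top_coe, Set.mem_univ, true_and]
    constructor
    · rintro ⟨y, rfl⟩
      refine ⟨u * y, ?_⟩
      rw [mySmul, mySmul, hkey]
      ring
    · rintro ⟨y, rfl⟩
      refine ⟨(↑hu.unit⁻¹ : Vmod p s) * y, ?_⟩
      rw [mySmul, mySmul, hkey, mul_assoc, ← mul_assoc u, hcancel, one_mul]
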